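/- Let Σ be the ranked alphabet with unary symbols f, g and constant ♯, and let R over Σ consist of the rules f(g(x₁)) → f(f(g(g(x₁)))), f(♯) → ♯, g(♯) → ♯, ♯ → f(♯), and ♯ → g(♯). Then: (a) for every t ∈ T_Σ one has t →*_R ♯ and ♯ →*_R t, so for every nonempty L ⊆ T_Σ, R*_Σ(L) = T_Σ (in particular R preserves Σ-recognizability of finite tree languages); but (b) for the extended alphabet Δ = Σ ∪ {h} with h a fresh unary symbol, R*_Δ({f(g(h(♯)))}) = {fⁿ(gⁿ(h(t))) : n ≥ 1, t ∈ T_Σ}, which is not a recognizable tree language over Δ; hence R does not preserve recognizability of finite tree languages. -/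

import Mathlib

set_option autoImplicit false

/-!
Basic framework: ranked alphabets, terms, term rewrite systems,
bottom-up tree automata, recognizability.
A ranked alphabet is modelled by a (finite) type `σ` together with an
arity function `ar : σ → ℕ`.  `Tm.var n` denotes the variable `x_{n+1}`,
so `T_Σ(X_m)` corresponds to terms all of whose variables satisfy `n < m`,
and ground terms (`T_Σ`) are terms satisfying `Tm.Ground`.
-/

/-- Terms over the ranked alphabet `(σ, ar)` with variables `x₁, x₂, …`
(`var n` is `x_{n+1}`). -/
inductive Tm (σ : Type) (ar : σ → ℕ) : Type
  | var : ℕ → Tm σ ar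
  | app : (f : σ) → (Fin (ar f) → Tm σ ar) → Tm σ ar

namespace Tm

variable {σ γ : Type} {ar : σ → ℕ} {arγ : γ → ℕ}

/-- Application of a substitution `θ` (assigning a term to each variable). -/
def subst (θ : ℕ → Tm σ ar) : Tm σ ar → Tm σ ar
  | var n => θ n
  | app f ts => app f fun i => (ts i).subst θ

/-- A term is ground if it contains no variables. -/
def Ground : Tm σ ar → Prop
  | var _ => False
  | app _ ts => ∀ i, (ts i).Ground

/-- The set of (indices of) variables occurring in a term. -/
def vars : Tm σ ar → Set ℕ
  | var n => {n}
  | app _ ts => ⋃ i, (ts i).vars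

/-- Number of occurrences of the variable `x_{n+1}` in a term. -/
def count (n : ℕ) : Tm σ ar → ℕ
  | var m => if m = n then 1 else 0
  | app _ ts => ∑ i, (ts i).count n

/-- A term is linear if every variable occurs at most once in it. -/
def Linear (t : Tm σ ar) : Prop := ∀ n, t.count n ≤ 1

/-- The symbol `s` occurs in the term. -/
def symOccurs (s : σ) : Tm σ ar → Prop
  | var _ => False
  | app f ts => f = s ∨ ∃ i, (ts i).symOccurs s

/-- Height of a term (constants and variables have height 0). -/
def height : Tm σ ar → ℕ
  | var _ => 0
  | app _ ts => Finset.univ.sup fun i => (ts i).height + 1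

/-- Renaming of the alphabet along an arity-preserving map. -/
def map (ι : σ → γ) (h : ∀ s, arγ (ι s) = ar s) : Tm σ ar → Tm γ arγ
  | var n => var n
  | app f ts => app (ι f) fun i => (ts (Fin.cast (h f) i)).map ι h

/-- The subterm of `t` at a position (a list of argument indices), if defined. -/
def subAt : Tm σ ar → List ℕ → Option (Tm σ ar)
  | t, [] => some t
  | var _, _ :: _ => none
  | app f ts, i :: p => if h : i < ar f then (ts ⟨i, h⟩).subAt p else none

/-- Subterm relation. -/
inductive Subtm : Tm σ ar → Tm σ ar → Prop
  | refl (t : Tm σ ar) : Subtm t t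
  | app {s : Tm σ ar} {f : σ} {ts : Fin (ar f) → Tm σ ar} (i : Fin (ar f)) :
      Subtm s (ts i) → Subtm s (Tm.app f ts)

end Tm

section Rewriting

variable {σ γ : Type} {ar : σ → ℕ} {arγ : γ → ℕ}

/-- One-step rewriting by the rule set `R`: apply a rule under a substitution
at the root, or rewrite inside one argument. -/
inductive Step (R : Set (Tm σ ar × Tm σ ar)) : Tm σ ar → Tm σ ar → Prop
  | rule {l r : Tm σ ar} (θ : ℕ → Tm σ ar) (h : (l, r) ∈ R) :
      Step R (l.subst θ) (r.subst θ)
  | congr {f : σ} {ts : Fin (ar f) → Tm σ ar} {t' : Tm σ ar} (i : Fin (ar f)) :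
      Step R (ts i) t' → Step R (Tm.app f ts) (Tm.app f (Function.update ts i t'))

/-- Many-step rewriting: reflexive-transitive closure of `Step`. -/
def Steps (R : Set (Tm σ ar × Tm σ ar)) : Tm σ ar → Tm σ ar → Prop :=
  Relation.ReflTransGen (Step R)

/-- `R` is a term rewrite system: finitely many rules, and every variable of a
right-hand side occurs in the corresponding left-hand side. -/
def IsTRS (R : Set (Tm σ ar × Tm σ ar)) : Prop :=
  R.Finite ∧ ∀ lr ∈ R, lr.2.vars ⊆ lr.1.vars

/-- The set `R*(L)` of descendants of members of `L`. -/
def Desc (R : Set (Tm σ ar × Tm σ ar)) (L : Set (Tm σ ar)) : Set (Tm σ ar) :=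
  {p | ∃ q ∈ L, Steps R q p}

/-- `R` is terminating: there is no infinite reduction sequence. -/
def Terminating (R : Set (Tm σ ar × Tm σ ar)) : Prop :=
  ¬ ∃ f : ℕ → Tm σ ar, ∀ n, Step R (f n) (f (n + 1))

/-- `R` is confluent. -/
def Confluent (R : Set (Tm σ ar × Tm σ ar)) : Prop :=
  ∀ a b c, Steps R a b → Steps R a c → ∃ d, Steps R b d ∧ Steps R c d

/-- `u` is an `R`-normal form of `t`. -/
def NormalFormOf (R : Set (Tm σ ar × Tm σ ar)) (t u : Tm σ ar) : Prop :=
  Steps R t u ∧ ¬ ∃ v, Step R u v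

/-- The term is a variable. -/
def IsVarTm (t : Tm σ ar) : Prop := ∃ n, t = Tm.var n

/-- Every left-hand side is linear. -/
def LeftLinearTRS (R : Set (Tm σ ar × Tm σ ar)) : Prop :=
  ∀ lr ∈ R, lr.1.Linear

/-- All left- and right-hand sides are linear. -/
def LinearTRS (R : Set (Tm σ ar × Tm σ ar)) : Prop :=
  ∀ lr ∈ R, lr.1.Linear ∧ lr.2.Linear

/-- No rule has a variable as left-hand side or as right-hand side. -/
def CollapseFree (R : Set (Tm σ ar × Tm σ ar)) : Prop :=
  ∀ lr ∈ R, ¬ IsVarTm lr.1 ∧ ¬ IsVarTm lr.2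

/-- Transport of a rule set along an arity-preserving renaming of the alphabet. -/
def mapRules (ι : σ → γ) (h : ∀ s, arγ (ι s) = ar s) (R : Set (Tm σ ar × Tm σ ar)) :
    Set (Tm γ arγ × Tm γ arγ) :=
  (fun lr => (lr.1.map ι h, lr.2.map ι h)) '' R

end Rewriting

/-- A bottom-up tree automaton over `(σ, ar)` with state type `Q`:
transition rules `δ(q₁,…,qₙ) → q`, λ-rules `q → q'`, and final states. -/
structure BTA (σ : Type) (ar : σ → ℕ) (Q : Type) where
  trans : ∀ f : σ, (Fin (ar f) → Q) → Q → Prop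
  eps : Q → Q → Prop
  final : Q → Prop

namespace BTA

variable {σ : Type} {ar : σ → ℕ} {Q : Type}

/-- `t →* q`: the (ground) term `t` can be rewritten to the state `q`. -/
inductive Reach (A : BTA σ ar Q) : Tm σ ar → Q → Prop
  | app {f : σ} {ts : Fin (ar f) → Tm σ ar} {qs : Fin (ar f) → Q} {q : Q} :
      (∀ i, Reach A (ts i) (qs i)) → A.trans f qs q → Reach A (Tm.app f ts) q
  | eps {t : Tm σ ar} {q q' : Q} : Reach A t q → A.eps q q' → Reach A t q'

/-- The tree language recognized by the automaton. -/
def Lang (A : BTA σ ar Q) : Set (Tm σ ar) := {t | ∃ q, A.final q ∧ A.Reach t q}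

end BTA

/-- A tree language is recognizable if some bottom-up tree automaton with a
finite state set recognizes it. -/
def Recognizable {σ : Type} {ar : σ → ℕ} (L : Set (Tm σ ar)) : Prop :=
  ∃ (Q : Type) (_ : Finite Q) (A : BTA σ ar Q), A.Lang = L

/-- `R` (a TRS over all of `σ`, thought of as `sign(R)`) preserves
recognizability of finite tree languages: for every ranked alphabet extending
`σ` (i.e. every finite type with an arity-preserving injection from `σ`) and
every finite tree language of ground terms, the descendant set is recognizable. -/
def PRF {σ : Type} {ar : σ → ℕ} (R : Set (Tm σ ar × Tm σ ar)) : Prop :=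
  ∀ (γ : Type) (arγ : γ → ℕ), Finite γ →
    ∀ ι : σ → γ, Function.Injective ι →
      ∀ h : ∀ s, arγ (ι s) = ar s,
        ∀ L : Set (Tm γ arγ), L.Finite → (∀ t ∈ L, t.Ground) →
          Recognizable (Desc (mapRules ι h R) L)

/-- `R` preserves recognizability: as `PRF`, but for arbitrary recognizable
tree languages. -/
def PR {σ : Type} {ar : σ → ℕ} (R : Set (Tm σ ar × Tm σ ar)) : Prop :=
  ∀ (γ : Type) (arγ : γ → ℕ), Finite γ →
    ∀ ι : σ → γ, Function.Injective ι →
      ∀ h : ∀ s, arγ (ι s) = ar s,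
        ∀ L : Set (Tm γ arγ), Recognizable L →
          Recognizable (Desc (mapRules ι h R) L)

/-! ### Statement 19: a linear TRS that preserves `Σ`-recognizability of
finite tree languages but, over the extended alphabet `Δ = Σ ∪ {h}`, does not
preserve recognizability of finite tree languages. -/

inductive Sg19 : Type
  | f | g | sharp
deriving DecidableEq

instance : Fintype Sg19 := ⟨{.f, .g, .sharp}, fun x => by cases x <;> simp⟩

def ar19 : Sg19 → ℕ
  | .f => 1
  | .g => 1
  | .sharp => 0

def sharp19 : Tm Sg19 ar19 := .app .sharp ![]
def f19 (t : Tm Sg19 ar19) : Tm Sg19 ar19 := .app .f ![t]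
def g19 (t : Tm Sg19 ar19) : Tm Sg19 ar19 := .app .g ![t]

/-- `R = { f(g(x₁)) → f(f(g(g(x₁)))), f(♯) → ♯, g(♯) → ♯, ♯ → f(♯), ♯ → g(♯) }` -/
def R19 : Set (Tm Sg19 ar19 × Tm Sg19 ar19) :=
  {(f19 (g19 (.var 0)), f19 (f19 (g19 (g19 (.var 0))))),
   (f19 sharp19, sharp19),
   (g19 sharp19, sharp19),
   (sharp19, f19 sharp19),
   (sharp19, g19 sharp19)}

/-- `Δ = Σ ∪ {h}` with a fresh unary symbol `h`. -/
def arD19 : Sg19 ⊕ Unit → ℕ := Sum.elim ar19 fun _ => 1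

/-- embedding `T_Σ → T_Δ` -/
def embD19 : Tm Sg19 ar19 → Tm (Sg19 ⊕ Unit) arD19 :=
  Tm.map Sum.inl fun _ => rfl

def fD19 (t : Tm (Sg19 ⊕ Unit) arD19) : Tm (Sg19 ⊕ Unit) arD19 :=
  .app (Sum.inl .f) ![t]
def gD19 (t : Tm (Sg19 ⊕ Unit) arD19) : Tm (Sg19 ⊕ Unit) arD19 :=
  .app (Sum.inl .g) ![t]
def hD19 (t : Tm (Sg19 ⊕ Unit) arD19) : Tm (Sg19 ⊕ Unit) arD19 :=
  .app (Sum.inr ()) ![t]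

/-- `R` viewed as a TRS over `Δ`. -/
def R19D : Set (Tm (Sg19 ⊕ Unit) arD19 × Tm (Sg19 ⊕ Unit) arD19) :=
  mapRules Sum.inl (fun _ => rfl) R19

section Aux
open Tm

lemma fin1_eq_zero {n : ℕ} (h : n = 1) (i : Fin n) : i = ⟨0, by omega⟩ :=
  Fin.ext (by have := i.isLt; omega)

lemma update1' {α : Type*} {n : ℕ} (h : n = 1) (ts : Fin n → α) (b : α) (i : Fin n) :
    Function.update ts i b = fun _ => b := by
  funext j
  have hj : j = i := Fin.ext (by have := j.isLt; have := i.isLt; omega)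
  rw [hj]; simp

lemma fin0_fun_eq {α : Type*} {n : ℕ} (h : n = 0) (ts ts' : Fin n → α) : ts = ts' := by
  funext i; exact absurd i.isLt (by omega)

end Aux
section Aux2
open Tm

lemma app_inj {σ : Type} {ar : σ → ℕ} {f f' : σ} {ts : Fin (ar f) → Tm σ ar}
    {ts' : Fin (ar f') → Tm σ ar} (h : Tm.app f ts = Tm.app f' ts') :
    f = f' ∧ HEq ts ts' := by
  injection h with h1 h2
  exact ⟨h1, h2⟩

lemma app_inj' {σ : Type} {ar : σ → ℕ} {f : σ} {ts ts' : Fin (ar f) → Tm σ ar}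
    (h : Tm.app f ts = Tm.app f ts') : ts = ts' := by
  cases h; rfl

lemma subst_sharp (θ : ℕ → Tm Sg19 ar19) : sharp19.subst θ = sharp19 := by
  show Tm.app _ _ = Tm.app _ _
  exact congrArg _ (fin0_fun_eq rfl _ _)

lemma subst_f (θ : ℕ → Tm Sg19 ar19) (t : Tm Sg19 ar19) :
    (f19 t).subst θ = f19 (t.subst θ) := by
  show Tm.app _ _ = Tm.app _ _
  refine congrArg _ ?_
  funext i
  rw [fin1_eq_zero (n := ar19 .f) rfl i]
  rfl

lemma subst_g (θ : ℕ → Tm Sg19 ar19) (t : Tm Sg19 ar19) :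
    (g19 t).subst θ = g19 (t.subst θ) := by
  show Tm.app _ _ = Tm.app _ _
  refine congrArg _ ?_
  funext i
  rw [fin1_eq_zero (n := ar19 .g) rfl i]
  rfl

end Aux2
section Aux3
open Tm

lemma vecone {α : Type*} (t : α) : ![t] = (fun _ : Fin 1 => t) := by
  funext i; exact Matrix.cons_val_fin_one t _ i

lemma step_unary {σ : Type} {ar : σ → ℕ} (R : Set (Tm σ ar × Tm σ ar)) (f : σ)
    (h1 : ar f = 1) {s t : Tm σ ar} (h : Step R s t) :
    Step R (Tm.app f (fun _ => s)) (Tm.app f (fun _ => t)) := by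
  have h2 := Step.congr (R := R) (f := f) (ts := fun _ => s) (t' := t) ⟨0, by omega⟩ h
  rwa [update1' h1] at h2

lemma steps_unary {σ : Type} {ar : σ → ℕ} (R : Set (Tm σ ar × Tm σ ar)) (f : σ)
    (h1 : ar f = 1) {s t : Tm σ ar} (h : Steps R s t) :
    Steps R (Tm.app f (fun _ => s)) (Tm.app f (fun _ => t)) :=
  Relation.ReflTransGen.lift (fun x => Tm.app f (fun _ => x))
    (fun _ _ hab => step_unary R f h1 hab) _ _ h

lemma f19_eq (t : Tm Sg19 ar19) : f19 t = Tm.app .f (fun _ => t) := by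
  show Tm.app _ _ = _; rw [vecone]; rfl

lemma g19_eq (t : Tm Sg19 ar19) : g19 t = Tm.app .g (fun _ => t) := by
  show Tm.app _ _ = _; rw [vecone]; rfl

lemma sharp19_eq (ts : Fin (ar19 .sharp) → Tm Sg19 ar19) : Tm.app .sharp ts = sharp19 :=
  congrArg _ (fin0_fun_eq rfl _ _)

lemma mem_R19_1 : (f19 (g19 (.var 0)), f19 (f19 (g19 (g19 (.var 0))))) ∈ R19 := by
  simp [R19]
lemma mem_R19_2 : (f19 sharp19, sharp19) ∈ R19 := by simp [R19]
lemma mem_R19_3 : (g19 sharp19, sharp19) ∈ R19 := by simp [R19]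
lemma mem_R19_4 : (sharp19, f19 sharp19) ∈ R19 := by simp [R19]
lemma mem_R19_5 : (sharp19, g19 sharp19) ∈ R19 := by simp [R19]

lemma step_fsharp : Step R19 (f19 sharp19) sharp19 := by
  have h := Step.rule (θ := fun _ => sharp19) mem_R19_2
  rwa [subst_f, subst_sharp] at h

lemma step_gsharp : Step R19 (g19 sharp19) sharp19 := by
  have h := Step.rule (θ := fun _ => sharp19) mem_R19_3
  rwa [subst_g, subst_sharp] at h

lemma step_sharpf : Step R19 sharp19 (f19 sharp19) := by
  have h := Step.rule (θ := fun _ => sharp19) mem_R19_4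
  rwa [subst_f, subst_sharp] at h

lemma step_sharpg : Step R19 sharp19 (g19 sharp19) := by
  have h := Step.rule (θ := fun _ => sharp19) mem_R19_5
  rwa [subst_g, subst_sharp] at h

lemma steps_f19 {s t : Tm Sg19 ar19} (h : Steps R19 s t) : Steps R19 (f19 s) (f19 t) := by
  rw [f19_eq, f19_eq]; exact steps_unary R19 Sg19.f rfl h

lemma steps_g19 {s t : Tm Sg19 ar19} (h : Steps R19 s t) : Steps R19 (g19 s) (g19 t) := by
  rw [g19_eq, g19_eq]; exact steps_unary R19 Sg19.g rfl h

lemma ground_to_sharp : ∀ t : Tm Sg19 ar19, t.Ground → Steps R19 t sharp19 := by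
  intro t
  induction t with
  | var n => intro h; exact absurd h (by simp [Tm.Ground])
  | app f ts ih =>
    intro h
    have hg : ∀ i, (ts i).Ground := h
    cases f with
    | sharp => rw [sharp19_eq ts]; exact Relation.ReflTransGen.refl
    | f =>
      have h0 : Tm.app Sg19.f ts = f19 (ts ⟨0, by decide⟩) := by
        rw [f19_eq]
        exact congrArg _ (by funext i; rw [fin1_eq_zero (n := ar19 .f) rfl i])
      rw [h0]
      exact Relation.ReflTransGen.trans
        (steps_f19 (ih _ (hg _)))
        (Relation.ReflTransGen.single step_fsharp)
    | g =>
      have h0 : Tm.app Sg19.g ts = g19 (ts ⟨0, by decide⟩) := by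
        rw [g19_eq]
        exact congrArg _ (by funext i; rw [fin1_eq_zero (n := ar19 .g) rfl i])
      rw [h0]
      exact Relation.ReflTransGen.trans
        (steps_g19 (ih _ (hg _)))
        (Relation.ReflTransGen.single step_gsharp)

lemma sharp_to_ground : ∀ t : Tm Sg19 ar19, t.Ground → Steps R19 sharp19 t := by
  intro t
  induction t with
  | var n => intro h; exact absurd h (by simp [Tm.Ground])
  | app f ts ih =>
    intro h
    have hg : ∀ i, (ts i).Ground := h
    cases f with
    | sharp => rw [sharp19_eq ts]; exact Relation.ReflTransGen.refl
    | f =>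
      have h0 : Tm.app Sg19.f ts = f19 (ts ⟨0, by decide⟩) := by
        rw [f19_eq]
        exact congrArg _ (by funext i; rw [fin1_eq_zero (n := ar19 .f) rfl i])
      rw [h0]
      exact Relation.ReflTransGen.trans
        (Relation.ReflTransGen.single step_sharpf)
        (steps_f19 (ih _ (hg _)))
    | g =>
      have h0 : Tm.app Sg19.g ts = g19 (ts ⟨0, by decide⟩) := by
        rw [g19_eq]
        exact congrArg _ (by funext i; rw [fin1_eq_zero (n := ar19 .g) rfl i])
      rw [h0]
      exact Relation.ReflTransGen.trans
        (Relation.ReflTransGen.single step_sharpg)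
        (steps_g19 (ih _ (hg _)))

end Aux3
section Aux4
open Tm

lemma ground_app_iff {σ : Type} {ar : σ → ℕ} (f : σ) (ts : Fin (ar f) → Tm σ ar) :
    (Tm.app f ts).Ground ↔ ∀ i, (ts i).Ground := Iff.rfl

lemma ground_unary1 {σ : Type} {ar : σ → ℕ} {f : σ} (h1 : ar f = 1)
    {ts : Fin (ar f) → Tm σ ar} (h : (Tm.app f ts).Ground) (i : Fin (ar f)) :
    (ts i).Ground := h i

lemma ground_f_iff (t : Tm Sg19 ar19) : (f19 t).Ground ↔ t.Ground := by
  constructor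
  · intro h; exact h ⟨0, by decide⟩
  · intro h i
    have : (![t] : Fin 1 → _) i = t := Matrix.cons_val_fin_one t _ i
    show (![t] i).Ground
    rw [this]; exact h

lemma ground_g_iff (t : Tm Sg19 ar19) : (g19 t).Ground ↔ t.Ground := by
  constructor
  · intro h; exact h ⟨0, by decide⟩
  · intro h i
    have : (![t] : Fin 1 → _) i = t := Matrix.cons_val_fin_one t _ i
    show (![t] i).Ground
    rw [this]; exact h

lemma ground_sharp : sharp19.Ground := by
  intro i; exact (Nat.not_lt_zero _ (show i.val < 0 from i.isLt)).elim

lemma step_ground {s t : Tm Sg19 ar19} (h : Step R19 s t) (hg : s.Ground) : t.Ground := by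
  induction h with
  | rule θ hmem =>
    rename_i l r
    simp only [R19, Set.mem_insert_iff, Set.mem_singleton_iff, Prod.mk.injEq] at hmem
    rcases hmem with ⟨hl, hr⟩ | ⟨hl, hr⟩ | ⟨hl, hr⟩ | ⟨hl, hr⟩ | ⟨hl, hr⟩ <;> subst hl <;> subst hr
    · rw [subst_f, subst_g] at hg
      rw [subst_f, subst_f, subst_g, subst_g]
      have := ((ground_f_iff _).1 hg)
      have := ((ground_g_iff _).1 this)
      rw [ground_f_iff, ground_f_iff, ground_g_iff, ground_g_iff]
      exact this
    · rw [subst_sharp]; exact ground_sharp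
    · rw [subst_sharp]; exact ground_sharp
    · rw [subst_f, subst_sharp]; rw [ground_f_iff]; exact ground_sharp
    · rw [subst_g, subst_sharp]; rw [ground_g_iff]; exact ground_sharp
  | congr i hstep ih =>
    intro j
    by_cases hj : j = i
    · subst hj; rw [Function.update_self]; exact ih (hg j)
    · rw [Function.update_of_ne hj]; exact hg j

lemma steps_ground {s t : Tm Sg19 ar19} (h : Steps R19 s t) (hg : s.Ground) : t.Ground := by
  induction h with
  | refl => exact hg
  | tail _ hstep ih => exact step_ground hstep ih

lemma desc_eq_ground (L : Set (Tm Sg19 ar19)) (hL : ∀ t ∈ L, t.Ground) (hne : L.Nonempty) :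
    Desc R19 L = {t : Tm Sg19 ar19 | t.Ground} := by
  ext t
  constructor
  · rintro ⟨q, hq, hsteps⟩
    exact steps_ground hsteps (hL q hq)
  · intro ht
    obtain ⟨q, hq⟩ := hne
    exact ⟨q, hq, Relation.ReflTransGen.trans (ground_to_sharp q (hL q hq))
      (sharp_to_ground t ht)⟩

lemma recog_ground : Recognizable {t : Tm Sg19 ar19 | t.Ground} := by
  refine ⟨Unit, inferInstance,
    ⟨fun _ _ _ => True, fun _ _ => False, fun _ => True⟩, ?_⟩
  ext t
  simp only [BTA.Lang, Set.mem_setOf_eq]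
  constructor
  · rintro ⟨q, -, hr⟩
    induction hr with
    | app hts htr ih => exact fun i => ih i
    | eps _ he => exact absurd he (by simp)
  · intro hg
    refine ⟨(), trivial, ?_⟩
    induction t with
    | var n => exact absurd hg (by simp [Tm.Ground])
    | app f ts ih =>
      exact BTA.Reach.app (qs := fun _ => ()) (fun i => ih i (hg i)) trivial

lemma recog_empty {σ : Type} {ar : σ → ℕ} : Recognizable (∅ : Set (Tm σ ar)) := by
  refine ⟨Unit, inferInstance,
    ⟨fun _ _ _ => True, fun _ _ => False, fun _ => False⟩, ?_⟩
  ext t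
  simp [BTA.Lang]

lemma desc_empty {σ : Type} {ar : σ → ℕ} (R : Set (Tm σ ar × Tm σ ar)) :
    Desc R (∅ : Set (Tm σ ar)) = ∅ := by
  ext t; simp [Desc]

end Aux4
section Aux5
open Tm

abbrev TmD := Tm (Sg19 ⊕ Unit) arD19

def shD : TmD := .app (Sum.inl .sharp) ![]

-- embedding computation lemmas
lemma emb_var (n : ℕ) : embD19 (.var n) = .var n := rfl

lemma emb_sharp : embD19 sharp19 = shD := by
  show Tm.app _ _ = Tm.app _ _
  exact congrArg _ (fin0_fun_eq rfl _ _)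

lemma emb_f (t : Tm Sg19 ar19) : embD19 (f19 t) = fD19 (embD19 t) := by
  show Tm.app _ _ = Tm.app _ _
  refine congrArg _ ?_
  funext i
  rw [fin1_eq_zero (n := arD19 (Sum.inl .f)) rfl i]
  rfl

lemma emb_g (t : Tm Sg19 ar19) : embD19 (g19 t) = gD19 (embD19 t) := by
  show Tm.app _ _ = Tm.app _ _
  refine congrArg _ ?_
  funext i
  rw [fin1_eq_zero (n := arD19 (Sum.inl .g)) rfl i]
  rfl

-- subst computation lemmas over Δ
lemma subst_shD (θ : ℕ → TmD) : shD.subst θ = shD := by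
  show Tm.app _ _ = Tm.app _ _
  exact congrArg _ (fin0_fun_eq rfl _ _)

lemma subst_fD (θ : ℕ → TmD) (t : TmD) : (fD19 t).subst θ = fD19 (t.subst θ) := by
  show Tm.app _ _ = Tm.app _ _
  refine congrArg _ ?_
  funext i
  rw [fin1_eq_zero (n := arD19 (Sum.inl .f)) rfl i]
  rfl

lemma subst_gD (θ : ℕ → TmD) (t : TmD) : (gD19 t).subst θ = gD19 (t.subst θ) := by
  show Tm.app _ _ = Tm.app _ _
  refine congrArg _ ?_
  funext i
  rw [fin1_eq_zero (n := arD19 (Sum.inl .g)) rfl i]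
  rfl

lemma subst_hD (θ : ℕ → TmD) (t : TmD) : (hD19 t).subst θ = hD19 (t.subst θ) := by
  show Tm.app _ _ = Tm.app _ _
  refine congrArg _ ?_
  funext i
  rw [fin1_eq_zero (n := arD19 (Sum.inr ())) rfl i]
  rfl

-- characterization of the transported rule set
lemma R19D_eq : R19D =
    {(fD19 (gD19 (.var 0)), fD19 (fD19 (gD19 (gD19 (.var 0))))),
     (fD19 shD, shD),
     (gD19 shD, shD),
     (shD, fD19 shD),
     (shD, gD19 shD)} := by
  show (fun lr : Tm Sg19 ar19 × Tm Sg19 ar19 => (embD19 lr.1, embD19 lr.2)) '' R19 = _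
  unfold R19
  rw [Set.image_insert_eq, Set.image_insert_eq, Set.image_insert_eq,
    Set.image_insert_eq, Set.image_singleton]
  have he : ∀ t : Tm Sg19 ar19, Tm.map Sum.inl (fun _ => rfl) t = embD19 t := fun _ => rfl
  simp only [he, emb_f, emb_g, emb_sharp, emb_var]

-- head-symbol helpers
lemma head_ne {f f' : Sg19 ⊕ Unit} {ts : Fin (arD19 f) → TmD} {ts' : Fin (arD19 f') → TmD}
    (h : f ≠ f') : Tm.app f ts ≠ Tm.app f' ts' := fun he => h (app_inj he).1

lemma fD_inj {a b : TmD} (h : fD19 a = fD19 b) : a = b := by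
  have h2 := app_inj' h
  have := congrFun h2 ⟨0, by decide⟩
  rwa [show ((![a] : Fin 1 → TmD) ⟨0, by decide⟩) = a from Matrix.cons_val_fin_one a _ _,
    show ((![b] : Fin 1 → TmD) ⟨0, by decide⟩) = b from Matrix.cons_val_fin_one b _ _] at this

lemma gD_inj {a b : TmD} (h : gD19 a = gD19 b) : a = b := by
  have h2 := app_inj' h
  have := congrFun h2 ⟨0, by decide⟩
  rwa [show ((![a] : Fin 1 → TmD) ⟨0, by decide⟩) = a from Matrix.cons_val_fin_one a _ _,
    show ((![b] : Fin 1 → TmD) ⟨0, by decide⟩) = b from Matrix.cons_val_fin_one b _ _] at this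

lemma hD_inj {a b : TmD} (h : hD19 a = hD19 b) : a = b := by
  have h2 := app_inj' h
  have := congrFun h2 ⟨0, by decide⟩
  rwa [show ((![a] : Fin 1 → TmD) ⟨0, by decide⟩) = a from Matrix.cons_val_fin_one a _ _,
    show ((![b] : Fin 1 → TmD) ⟨0, by decide⟩) = b from Matrix.cons_val_fin_one b _ _] at this

lemma fD_ne_gD (a b : TmD) : fD19 a ≠ gD19 b := head_ne (by simp)
lemma fD_ne_hD (a b : TmD) : fD19 a ≠ hD19 b := head_ne (by simp)
lemma gD_ne_hD (a b : TmD) : gD19 a ≠ hD19 b := head_ne (by simp)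
lemma fD_ne_sh (a : TmD) : fD19 a ≠ shD := head_ne (by simp)
lemma gD_ne_sh (a : TmD) : gD19 a ≠ shD := head_ne (by simp)
lemma hD_ne_sh (a : TmD) : hD19 a ≠ shD := head_ne (by simp)

end Aux5
section Aux6
open Tm

lemma fD19_eq (t : TmD) : fD19 t = Tm.app (Sum.inl .f) (fun _ => t) := by
  show Tm.app _ _ = _; rw [vecone]; rfl
lemma gD19_eq (t : TmD) : gD19 t = Tm.app (Sum.inl .g) (fun _ => t) := by
  show Tm.app _ _ = _; rw [vecone]; rfl
lemma hD19_eq (t : TmD) : hD19 t = Tm.app (Sum.inr ()) (fun _ => t) := by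
  show Tm.app _ _ = _; rw [vecone]; rfl

lemma steps_fD {s t : TmD} (h : Steps R19D s t) : Steps R19D (fD19 s) (fD19 t) := by
  rw [fD19_eq, fD19_eq]; exact steps_unary R19D (Sum.inl .f) rfl h
lemma steps_gD {s t : TmD} (h : Steps R19D s t) : Steps R19D (gD19 s) (gD19 t) := by
  rw [gD19_eq, gD19_eq]; exact steps_unary R19D (Sum.inl .g) rfl h
lemma steps_hD {s t : TmD} (h : Steps R19D s t) : Steps R19D (hD19 s) (hD19 t) := by
  rw [hD19_eq, hD19_eq]; exact steps_unary R19D (Sum.inr ()) rfl h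

lemma step_fD {s t : TmD} (h : Step R19D s t) : Step R19D (fD19 s) (fD19 t) := by
  rw [fD19_eq, fD19_eq]; exact step_unary R19D (Sum.inl .f) rfl h

lemma step_fD_iter (k : ℕ) {s t : TmD} (h : Step R19D s t) :
    Step R19D (fD19^[k] s) (fD19^[k] t) := by
  induction k with
  | zero => exact h
  | succ m ih =>
    rw [Function.iterate_succ_apply', Function.iterate_succ_apply']
    exact step_fD ih

lemma steps_fD_iter (k : ℕ) {s t : TmD} (h : Steps R19D s t) :
    Steps R19D (fD19^[k] s) (fD19^[k] t) := by
  induction k with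
  | zero => exact h
  | succ m ih =>
    rw [Function.iterate_succ_apply', Function.iterate_succ_apply']
    exact steps_fD ih

lemma steps_gD_iter (k : ℕ) {s t : TmD} (h : Steps R19D s t) :
    Steps R19D (gD19^[k] s) (gD19^[k] t) := by
  induction k with
  | zero => exact h
  | succ m ih =>
    rw [Function.iterate_succ_apply', Function.iterate_succ_apply']
    exact steps_gD ih

lemma subst_varD (θ : ℕ → TmD) (n : ℕ) : (Tm.var n : TmD).subst θ = θ n := rfl

lemma mem_R19D_1 : (fD19 (gD19 (.var 0)), fD19 (fD19 (gD19 (gD19 (.var 0))))) ∈ R19D := by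
  rw [R19D_eq]; left; rfl
lemma mem_R19D_2 : (fD19 shD, shD) ∈ R19D := by rw [R19D_eq]; right; left; rfl
lemma mem_R19D_3 : (gD19 shD, shD) ∈ R19D := by rw [R19D_eq]; right; right; left; rfl
lemma mem_R19D_4 : (shD, fD19 shD) ∈ R19D := by rw [R19D_eq]; right; right; right; left; rfl
lemma mem_R19D_5 : (shD, gD19 shD) ∈ R19D := by rw [R19D_eq]; right; right; right; right; rfl

lemma step_rule1 (x : TmD) :
    Step R19D (fD19 (gD19 x)) (fD19 (fD19 (gD19 (gD19 x)))) := by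
  have h := Step.rule (θ := fun _ => x) mem_R19D_1
  rwa [subst_fD, subst_gD, subst_fD, subst_fD, subst_gD, subst_gD, subst_varD] at h

lemma fD_iter_comm (k : ℕ) (y : TmD) : fD19^[k] (fD19 y) = fD19 (fD19^[k] y) :=
  (Function.iterate_succ_apply fD19 k y).symm.trans (Function.iterate_succ_apply' fD19 k y)

lemma pump_succ (n : ℕ) (hn : 1 ≤ n) (x : TmD) :
    Step R19D (fD19^[n] (gD19^[n] x)) (fD19^[n + 1] (gD19^[n + 1] x)) := by
  obtain ⟨m, rfl⟩ : ∃ m, n = m + 1 := ⟨n - 1, by omega⟩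
  have h1 := step_fD_iter m (step_rule1 (gD19^[m] x))
  simp only [fD_iter_comm] at h1
  simpa only [Function.iterate_succ_apply'] using h1

lemma pump_many (n : ℕ) (hn : 1 ≤ n) (x : TmD) :
    Steps R19D (fD19 (gD19 x)) (fD19^[n] (gD19^[n] x)) := by
  induction n with
  | zero => omega
  | succ m ih =>
    rcases Nat.eq_or_lt_of_le hn with h | h
    · have : fD19^[m + 1] (gD19^[m + 1] x) = fD19 (gD19 x) := by
        have hm : m = 0 := by omega
        subst hm; rfl
      rw [this]
      exact Relation.ReflTransGen.refl
    · have hm : 1 ≤ m := by omega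
      exact Relation.ReflTransGen.tail (ih hm) (pump_succ m hm x)

-- lifting Σ-steps to Δ-steps along the embedding
lemma map_subst {σ γ : Type} {ar : σ → ℕ} {arγ : γ → ℕ} (ι : σ → γ)
    (hh : ∀ s, arγ (ι s) = ar s) (θ : ℕ → Tm σ ar) (s : Tm σ ar) :
    (s.subst θ).map ι hh = (s.map ι hh).subst (fun n => (θ n).map ι hh) := by
  induction s with
  | var n => rfl
  | app f ts ih =>
    show Tm.app _ _ = Tm.app _ _
    refine congrArg _ ?_
    funext i
    exact ih _

lemma emb_app (f : Sg19) (ts : Fin (ar19 f) → Tm Sg19 ar19) :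
    embD19 (Tm.app f ts) = Tm.app (Sum.inl f) (fun j => embD19 (ts j)) := rfl

lemma step_emb {s t : Tm Sg19 ar19} (h : Step R19 s t) :
    Step R19D (embD19 s) (embD19 t) := by
  induction h with
  | rule θ hmem =>
    rename_i l r
    have hm' : (embD19 l, embD19 r) ∈ R19D := ⟨(l, r), hmem, rfl⟩
    have h2 := Step.rule (θ := fun n => embD19 (θ n)) hm'
    have e1 : embD19 (l.subst θ) = (embD19 l).subst (fun n => embD19 (θ n)) :=
      map_subst _ _ _ _
    have e2 : embD19 (r.subst θ) = (embD19 r).subst (fun n => embD19 (θ n)) :=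
      map_subst _ _ _ _
    rw [e1, e2]
    exact h2
  | congr i hstep ih =>
    rename_i f ts t'
    rw [emb_app, emb_app]
    have hupd : (fun j => embD19 (Function.update ts i t' j)) =
        Function.update (fun j => embD19 (ts j)) i (embD19 t') := by
      funext j
      by_cases hj : j = i
      · subst hj; simp
      · simp [Function.update_of_ne hj]
    have hc := Step.congr (R := R19D) (f := Sum.inl f)
      (ts := fun j => embD19 (ts j)) (t' := embD19 t') i ih
    convert hc using 2
    exact hupd

lemma steps_emb {s t : Tm Sg19 ar19} (h : Steps R19 s t) :
    Steps R19D (embD19 s) (embD19 t) :=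
  Relation.ReflTransGen.lift embD19 (fun _ _ hab => step_emb hab) _ _ h

lemma reaches_S (n : ℕ) (hn : 1 ≤ n) (t : Tm Sg19 ar19) (ht : t.Ground) :
    Steps R19D (fD19 (gD19 (hD19 (embD19 sharp19))))
      (fD19^[n] (gD19^[n] (hD19 (embD19 t)))) := by
  refine Relation.ReflTransGen.trans (pump_many n hn _) ?_
  exact steps_fD_iter n (steps_gD_iter n (steps_hD (steps_emb (sharp_to_ground t ht))))

end Aux6
section Aux7
open Tm

lemma emb_eq_fD {t : Tm Sg19 ar19} {u : TmD} (h : embD19 t = fD19 u) :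
    ∃ s, t = f19 s ∧ u = embD19 s := by
  cases t with
  | var n => exact absurd h (by exact fun hh => by cases hh)
  | app f ts =>
    rw [emb_app] at h
    obtain ⟨h1, h2⟩ := app_inj h
    have hf : f = .f := by injection h1
    subst hf
    have h3 : (fun j => embD19 (ts j)) = ![u] := eq_of_heq h2
    refine ⟨ts ⟨0, by decide⟩, ?_, ?_⟩
    · rw [f19_eq]
      exact congrArg _ (by funext i; rw [fin1_eq_zero (n := ar19 .f) rfl i])
    · have := congrFun h3 ⟨0, by decide⟩
      change embD19 _ = u at this
      exact this.symm

lemma emb_eq_gD {t : Tm Sg19 ar19} {u : TmD} (h : embD19 t = gD19 u) :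
    ∃ s, t = g19 s ∧ u = embD19 s := by
  cases t with
  | var n => exact absurd h (by exact fun hh => by cases hh)
  | app f ts =>
    rw [emb_app] at h
    obtain ⟨h1, h2⟩ := app_inj h
    have hf : f = .g := by injection h1
    subst hf
    have h3 : (fun j => embD19 (ts j)) = ![u] := eq_of_heq h2
    refine ⟨ts ⟨0, by decide⟩, ?_, ?_⟩
    · rw [g19_eq]
      exact congrArg _ (by funext i; rw [fin1_eq_zero (n := ar19 .g) rfl i])
    · have := congrFun h3 ⟨0, by decide⟩
      change embD19 _ = u at this
      exact this.symm

lemma emb_eq_sh {t : Tm Sg19 ar19} (h : embD19 t = shD) : t = sharp19 := by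
  cases t with
  | var n => exact absurd h (by exact fun hh => by cases hh)
  | app f ts =>
    rw [emb_app] at h
    obtain ⟨h1, h2⟩ := app_inj h
    have hf : f = .sharp := by injection h1
    subst hf
    exact sharp19_eq ts

lemma emb_ne_hD (t : Tm Sg19 ar19) (u : TmD) : embD19 t ≠ hD19 u := by
  cases t with
  | var n => exact fun hh => by cases hh
  | app f ts =>
    rw [emb_app]
    exact head_ne (by simp)

end Aux7
section Aux8
open Tm

lemma step_emb_inv : ∀ t : Tm Sg19 ar19, t.Ground → ∀ v, Step R19D (embD19 t) v →
    ∃ t', t'.Ground ∧ v = embD19 t' := by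
  intro t
  induction t with
  | var n => intro hg; exact absurd hg (by simp [Tm.Ground])
  | app f ts ih =>
    intro hg v hstep
    generalize hu : embD19 (Tm.app f ts) = u at hstep
    cases hstep with
    | rule θ hmem =>
      rename_i l r
      rw [R19D_eq] at hmem
      simp only [Set.mem_insert_iff, Set.mem_singleton_iff, Prod.mk.injEq] at hmem
      rcases hmem with ⟨hl, hr⟩ | ⟨hl, hr⟩ | ⟨hl, hr⟩ | ⟨hl, hr⟩ | ⟨hl, hr⟩ <;>
        subst hl <;> subst hr
      · rw [subst_fD, subst_gD, subst_varD] at hu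
        obtain ⟨s, hts, hsu⟩ := emb_eq_fD hu
        obtain ⟨s2, hs2, hs2u⟩ := emb_eq_gD hsu.symm
        subst hs2
        have hgs2 : s2.Ground := by
          have hg' : (f19 (g19 s2)).Ground := hts ▸ hg
          exact (ground_g_iff _).1 ((ground_f_iff _).1 hg')
        refine ⟨f19 (f19 (g19 (g19 s2))), ?_, ?_⟩
        · rw [ground_f_iff, ground_f_iff, ground_g_iff, ground_g_iff]; exact hgs2
        · rw [subst_fD, subst_fD, subst_gD, subst_gD, subst_varD,
            emb_f, emb_f, emb_g, emb_g, ← hs2u]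
      · rw [subst_fD, subst_shD] at hu
        refine ⟨sharp19, ground_sharp, ?_⟩
        rw [subst_shD, emb_sharp]
      · rw [subst_gD, subst_shD] at hu
        refine ⟨sharp19, ground_sharp, ?_⟩
        rw [subst_shD, emb_sharp]
      · refine ⟨f19 sharp19, (ground_f_iff _).2 ground_sharp, ?_⟩
        rw [subst_fD, subst_shD, emb_f, emb_sharp]
      · refine ⟨g19 sharp19, (ground_g_iff _).2 ground_sharp, ?_⟩
        rw [subst_gD, subst_shD, emb_g, emb_sharp]
    | congr i hstep' =>
      rename_i fΔ ts' w
      rw [emb_app] at hu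
      obtain ⟨h1, h2⟩ := app_inj hu
      subst h1
      have h3 : (fun j => embD19 (ts j)) = ts' := eq_of_heq h2
      subst h3
      obtain ⟨t'', hgt, rfl⟩ := ih i (hg i) w hstep'
      refine ⟨Tm.app f (Function.update ts i t''), ?_, ?_⟩
      · intro j
        by_cases hj : j = i
        · subst hj; rw [Function.update_self]; exact hgt
        · rw [Function.update_of_ne hj]; exact hg j
      · rw [emb_app]
        exact congrArg _ (by
          funext j
          by_cases hj : j = i
          · subst hj
            exact (Function.update_self (a := j) (v := embD19 t'')
              (f := fun j => embD19 (ts j))).trans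
              (congrArg embD19 (Function.update_self (a := j) (v := t'') (f := ts))).symm
          · exact (Function.update_of_ne (a := j) (a' := i) hj (v := embD19 t'')
              (f := fun j => embD19 (ts j))).trans
              (congrArg embD19 (Function.update_of_ne (a := j) (a' := i) hj (v := t'') (f := ts))).symm)

end Aux8
section Aux9
open Tm

lemma chain_ne_sh (k n : ℕ) (x : TmD) : fD19^[k] (gD19^[n] (hD19 x)) ≠ shD := by
  cases k with
  | zero =>
    cases n with
    | zero => exact hD_ne_sh x
    | succ m => rw [Function.iterate_succ_apply']; exact gD_ne_sh _
  | succ m => rw [Function.iterate_succ_apply']; exact fD_ne_sh _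

lemma chain_eq_fD {k n : ℕ} {x y : TmD} (h : fD19^[k] (gD19^[n] (hD19 x)) = fD19 y) :
    1 ≤ k ∧ y = fD19^[k - 1] (gD19^[n] (hD19 x)) := by
  cases k with
  | zero =>
    exfalso
    cases n with
    | zero => exact fD_ne_hD y x h.symm
    | succ m => rw [Function.iterate_succ_apply'] at h; exact fD_ne_gD y _ h.symm
  | succ m =>
    rw [Function.iterate_succ_apply'] at h
    exact ⟨by omega, (fD_inj h).symm⟩

lemma chain_eq_gD {k n : ℕ} {x y : TmD} (h : fD19^[k] (gD19^[n] (hD19 x)) = gD19 y) :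
    k = 0 ∧ 1 ≤ n ∧ y = gD19^[n - 1] (hD19 x) := by
  cases k with
  | zero =>
    cases n with
    | zero => exact absurd h.symm (gD_ne_hD y x)
    | succ m =>
      rw [Function.iterate_succ_apply'] at h
      exact ⟨rfl, by omega, (gD_inj h).symm⟩
  | succ m =>
    rw [Function.iterate_succ_apply'] at h
    exact absurd h (fD_ne_gD _ y)

lemma chain_eq_hD {k n : ℕ} {x y : TmD} (h : fD19^[k] (gD19^[n] (hD19 x)) = hD19 y) :
    k = 0 ∧ n = 0 ∧ y = x := by
  cases k with
  | zero =>
    cases n with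
    | zero => exact ⟨rfl, rfl, (hD_inj h).symm⟩
    | succ m =>
      rw [Function.iterate_succ_apply'] at h
      exact absurd h (gD_ne_hD _ y)
  | succ m =>
    rw [Function.iterate_succ_apply'] at h
    exact absurd h (fD_ne_hD _ y)

end Aux9
section Aux10
open Tm

lemma gpart : ∀ m : ℕ, ∀ t : Tm Sg19 ar19, t.Ground → ∀ v,
    Step R19D (gD19^[m] (hD19 (embD19 t))) v →
    ∃ t', t'.Ground ∧ v = gD19^[m] (hD19 (embD19 t')) := by
  intro m
  induction m with
  | zero =>
    intro t hg v hstep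
    generalize hu : hD19 (embD19 t) = u at hstep
    cases hstep with
    | rule θ hmem =>
      rename_i l r
      rw [R19D_eq] at hmem
      simp only [Set.mem_insert_iff, Set.mem_singleton_iff, Prod.mk.injEq] at hmem
      rcases hmem with ⟨hl, hr⟩ | ⟨hl, hr⟩ | ⟨hl, hr⟩ | ⟨hl, hr⟩ | ⟨hl, hr⟩ <;>
        subst hl <;> subst hr
      · rw [subst_fD, subst_gD, subst_varD] at hu
        exact absurd hu.symm (fD_ne_hD _ _)
      · rw [subst_fD, subst_shD] at hu
        exact absurd hu.symm (fD_ne_hD _ _)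
      · rw [subst_gD, subst_shD] at hu
        exact absurd hu.symm (gD_ne_hD _ _)
      · rw [subst_shD] at hu
        exact absurd hu (hD_ne_sh _)
      · rw [subst_shD] at hu
        exact absurd hu (hD_ne_sh _)
    | congr i hstep' =>
      rename_i fΔ ts' w
      rw [hD19_eq] at hu
      obtain ⟨h1, h2⟩ := app_inj hu
      subst h1
      have h3 : (fun _ => embD19 t) = ts' := eq_of_heq h2
      subst h3
      obtain ⟨t', hgt, rfl⟩ := step_emb_inv t hg w hstep'
      refine ⟨t', hgt, ?_⟩
      show Tm.app _ _ = _
      rw [update1' (n := arD19 (Sum.inr ())) rfl, hD19_eq]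
      rfl
  | succ m ihm =>
    intro t hg v hstep
    rw [Function.iterate_succ_apply'] at hstep
    generalize hu : gD19 (gD19^[m] (hD19 (embD19 t))) = u at hstep
    cases hstep with
    | rule θ hmem =>
      rename_i l r
      rw [R19D_eq] at hmem
      simp only [Set.mem_insert_iff, Set.mem_singleton_iff, Prod.mk.injEq] at hmem
      rcases hmem with ⟨hl, hr⟩ | ⟨hl, hr⟩ | ⟨hl, hr⟩ | ⟨hl, hr⟩ | ⟨hl, hr⟩ <;>
        subst hl <;> subst hr
      · rw [subst_fD, subst_gD, subst_varD] at hu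
        exact absurd hu.symm (fD_ne_gD _ _)
      · rw [subst_fD, subst_shD] at hu
        exact absurd hu.symm (fD_ne_gD _ _)
      · rw [subst_gD, subst_shD] at hu
        exact absurd (gD_inj hu) (chain_ne_sh 0 m _)
      · rw [subst_shD] at hu
        exact absurd hu (gD_ne_sh _)
      · rw [subst_shD] at hu
        exact absurd hu (gD_ne_sh _)
    | congr i hstep' =>
      rename_i fΔ ts' w
      rw [gD19_eq] at hu
      obtain ⟨h1, h2⟩ := app_inj hu
      subst h1
      have h3 : (fun _ => gD19^[m] (hD19 (embD19 t))) = ts' := eq_of_heq h2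
      subst h3
      obtain ⟨t', hgt, rfl⟩ := ihm t hg w hstep'
      refine ⟨t', hgt, ?_⟩
      rw [Function.iterate_succ_apply']
      show Tm.app _ _ = _
      rw [update1' (n := arD19 (Sum.inl .g)) rfl, gD19_eq]

end Aux10
section Aux11
open Tm

lemma fpart : ∀ k n : ℕ, 1 ≤ n → ∀ t : Tm Sg19 ar19, t.Ground → ∀ v,
    Step R19D (fD19^[k] (gD19^[n] (hD19 (embD19 t)))) v →
    (∃ t', t'.Ground ∧ v = fD19^[k] (gD19^[n] (hD19 (embD19 t')))) ∨
    (1 ≤ k ∧ v = fD19^[k + 1] (gD19^[n + 1] (hD19 (embD19 t)))) := by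
  intro k
  induction k with
  | zero =>
    intro n hn t hg v hstep
    exact Or.inl (gpart n t hg v hstep)
  | succ k ihk =>
    intro n hn t hg v hstep
    obtain ⟨p, rfl⟩ : ∃ p, n = p + 1 := ⟨n - 1, by omega⟩
    rw [Function.iterate_succ_apply' fD19 k] at hstep
    generalize hu : fD19 (fD19^[k] (gD19^[p + 1] (hD19 (embD19 t)))) = u at hstep
    cases hstep with
    | rule θ hmem =>
      rename_i l r
      rw [R19D_eq] at hmem
      simp only [Set.mem_insert_iff, Set.mem_singleton_iff, Prod.mk.injEq] at hmem
      rcases hmem with ⟨hl, hr⟩ | ⟨hl, hr⟩ | ⟨hl, hr⟩ | ⟨hl, hr⟩ | ⟨hl, hr⟩ <;>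
        subst hl <;> subst hr
      · -- rule f(g(x)) → f(f(g(g(x))))
        rw [subst_fD, subst_gD, subst_varD] at hu
        have h1 : fD19^[k] (gD19^[p + 1] (hD19 (embD19 t))) = gD19 (θ 0) := fD_inj hu
        obtain ⟨hk0, hp1, hθ⟩ := chain_eq_gD h1
        right
        subst hk0
        refine ⟨by omega, ?_⟩
        rw [subst_fD, subst_fD, subst_gD, subst_gD, subst_varD, hθ]
        simp only [Nat.add_succ_sub_one]
        simp only [Function.iterate_succ_apply', Function.iterate_zero, id_eq,
          Nat.add_zero]
      · rw [subst_fD, subst_shD] at hu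
        exact absurd (fD_inj hu) (chain_ne_sh k (p + 1) _)
      · rw [subst_gD, subst_shD] at hu
        exact absurd hu (fD_ne_gD _ _)
      · rw [subst_shD] at hu
        exact absurd hu (fD_ne_sh _)
      · rw [subst_shD] at hu
        exact absurd hu (fD_ne_sh _)
    | congr i hstep' =>
      rename_i fΔ ts' w
      rw [fD19_eq] at hu
      obtain ⟨h1, h2⟩ := app_inj hu
      subst h1
      have h3 : (fun _ => fD19^[k] (gD19^[p + 1] (hD19 (embD19 t)))) = ts' := eq_of_heq h2
      subst h3
      rcases ihk (p + 1) (by omega) t hg w hstep' with ⟨t', hgt, rfl⟩ | ⟨hk1, rfl⟩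
      · left
        refine ⟨t', hgt, ?_⟩
        rw [Function.iterate_succ_apply' fD19 k]
        show Tm.app _ _ = _
        rw [update1' (n := arD19 (Sum.inl .f)) rfl, fD19_eq]
      · right
        refine ⟨by omega, ?_⟩
        rw [Function.iterate_succ_apply' fD19 (k + 1)]
        show Tm.app _ _ = _
        rw [update1' (n := arD19 (Sum.inl .f)) rfl, fD19_eq]

end Aux11
section Aux12
open Tm

def SD : Set TmD :=
  {u | ∃ n : ℕ, 1 ≤ n ∧ ∃ t : Tm Sg19 ar19,
    t.Ground ∧ u = fD19^[n] (gD19^[n] (hD19 (embD19 t)))}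

lemma SD_closed_step {u v : TmD} (hu : u ∈ SD) (h : Step R19D u v) : v ∈ SD := by
  obtain ⟨n, hn, t, ht, rfl⟩ := hu
  rcases fpart n n hn t ht v h with ⟨t', hgt, rfl⟩ | ⟨-, rfl⟩
  · exact ⟨n, hn, t', hgt, rfl⟩
  · exact ⟨n + 1, by omega, t, ht, rfl⟩

lemma SD_closed {u v : TmD} (hu : u ∈ SD) (h : Steps R19D u v) : v ∈ SD := by
  induction h with
  | refl => exact hu
  | tail _ hstep ih => exact SD_closed_step ih hstep

lemma start_eq : fD19 (gD19 (hD19 (embD19 sharp19))) =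
    fD19^[1] (gD19^[1] (hD19 (embD19 sharp19))) := rfl

lemma descD_eq : Desc R19D {fD19 (gD19 (hD19 (embD19 sharp19)))} = SD := by
  ext u
  constructor
  · rintro ⟨q, hq, hsteps⟩
    rw [Set.mem_singleton_iff] at hq
    subst hq
    exact SD_closed ⟨1, le_refl 1, sharp19, ground_sharp, start_eq⟩ hsteps
  · rintro ⟨n, hn, t, ht, rfl⟩
    exact ⟨_, rfl, reaches_S n hn t ht⟩

end Aux12
section Aux13
open Tm

lemma gh_inj : ∀ n n' : ℕ, ∀ x x' : TmD,
    gD19^[n] (hD19 x) = gD19^[n'] (hD19 x') → n = n' ∧ x = x' := by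
  intro n
  induction n with
  | zero =>
    intro n' x x' h
    cases n' with
    | zero => exact ⟨rfl, hD_inj h⟩
    | succ m =>
      rw [Function.iterate_succ_apply'] at h
      exact absurd h.symm (gD_ne_hD _ _)
  | succ m ih =>
    intro n' x x' h
    cases n' with
    | zero =>
      rw [Function.iterate_succ_apply'] at h
      exact absurd h (gD_ne_hD _ _)
    | succ m' =>
      rw [Function.iterate_succ_apply', Function.iterate_succ_apply'] at h
      obtain ⟨h1, h2⟩ := ih m' x x' (gD_inj h)
      exact ⟨by omega, h2⟩

lemma fgh_inj : ∀ k k' n n' : ℕ, ∀ x x' : TmD,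
    fD19^[k] (gD19^[n] (hD19 x)) = fD19^[k'] (gD19^[n'] (hD19 x')) →
    k = k' ∧ n = n' ∧ x = x' := by
  intro k
  induction k with
  | zero =>
    intro k' n n' x x' h
    cases k' with
    | zero =>
      obtain ⟨h1, h2⟩ := gh_inj n n' x x' h
      exact ⟨rfl, h1, h2⟩
    | succ m =>
      rw [Function.iterate_succ_apply' fD19 m] at h
      obtain ⟨hle, -⟩ := chain_eq_fD (k := 0) h
      omega
  | succ m ih =>
    intro k' n n' x x' h
    cases k' with
    | zero =>
      rw [Function.iterate_succ_apply' fD19 m] at h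
      obtain ⟨hle, -⟩ := chain_eq_fD (k := 0) h.symm
      omega
    | succ m' =>
      rw [Function.iterate_succ_apply' fD19 m, Function.iterate_succ_apply' fD19 m'] at h
      obtain ⟨h1, h2, h3⟩ := ih m' n n' x x' (fD_inj h)
      exact ⟨by omega, h2, h3⟩

variable {Q : Type}

lemma reach_fD_mono (A : BTA (Sg19 ⊕ Unit) arD19 Q) (t1 t2 : TmD)
    (h : ∀ q, A.Reach t1 q → A.Reach t2 q) :
    ∀ q, A.Reach (fD19 t1) q → A.Reach (fD19 t2) q := by
  intro q hr
  generalize hv : fD19 t1 = u at hr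
  induction hr with
  | app hts htr ihts =>
    rename_i fsym tsv qsv qv
    rw [fD19_eq] at hv
    obtain ⟨h1, h2⟩ := app_inj hv
    subst h1
    have h3 : (fun _ => t1) = tsv := eq_of_heq h2
    subst h3
    rw [fD19_eq]
    exact BTA.Reach.app (qs := qsv) (fun i => h _ (hts i)) htr
  | eps hr' he ih =>
    exact BTA.Reach.eps (ih hv) he

lemma reach_fD_iter_mono (A : BTA (Sg19 ⊕ Unit) arD19 Q) (k : ℕ) (t1 t2 : TmD)
    (h : ∀ q, A.Reach t1 q → A.Reach t2 q) :
    ∀ q, A.Reach (fD19^[k] t1) q → A.Reach (fD19^[k] t2) q := by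
  induction k with
  | zero => exact h
  | succ m ih =>
    rw [Function.iterate_succ_apply' fD19 m, Function.iterate_succ_apply' fD19 m]
    exact reach_fD_mono A _ _ ih

lemma not_recog_SD : ¬ Recognizable SD := by
  rintro ⟨Q, hQ, A, hL⟩
  -- pigeonhole on the states reachable from gⁿ(h(♯))
  obtain ⟨a, b, hne, hab⟩ := Finite.exists_ne_map_eq_of_infinite
    (fun n : ℕ => {q : Q | A.Reach (gD19^[n] (hD19 (embD19 sharp19))) q})
  -- wlog n < m
  obtain ⟨n, m, hset, hlt⟩ :
      ∃ n m : ℕ, ({q : Q | A.Reach (gD19^[m] (hD19 (embD19 sharp19))) q} =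
        {q : Q | A.Reach (gD19^[n] (hD19 (embD19 sharp19))) q}) ∧ n < m := by
    rcases lt_or_gt_of_ne hne with h' | h'
    · exact ⟨a, b, hab.symm, h'⟩
    · exact ⟨b, a, hab, h'⟩
  have hmem : fD19^[m] (gD19^[m] (hD19 (embD19 sharp19))) ∈ SD :=
    ⟨m, by omega, sharp19, ground_sharp, rfl⟩
  rw [← hL] at hmem
  obtain ⟨q, hfin, hr⟩ := hmem
  have hmono : ∀ q, A.Reach (gD19^[m] (hD19 (embD19 sharp19))) q →
      A.Reach (gD19^[n] (hD19 (embD19 sharp19))) q := by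
    intro q' hq'
    have : q' ∈ {q : Q | A.Reach (gD19^[m] (hD19 (embD19 sharp19))) q} := hq'
    rw [hset] at this
    exact this
  have hr2 := reach_fD_iter_mono A m _ _ hmono q hr
  have hmem2 : fD19^[m] (gD19^[n] (hD19 (embD19 sharp19))) ∈ A.Lang := ⟨q, hfin, hr2⟩
  rw [hL] at hmem2
  obtain ⟨k, hk, t, ht, heq⟩ := hmem2
  obtain ⟨h1, h2, -⟩ := fgh_inj m k n k _ _ heq
  omega

end Aux13
section Aux14
open Tm

lemma ground_fD {x : TmD} (hx : x.Ground) : (fD19 x).Ground := by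
  intro i
  show ((![x] : Fin 1 → TmD) i).Ground
  rw [Matrix.cons_val_fin_one x _ i]; exact hx

lemma ground_gD {x : TmD} (hx : x.Ground) : (gD19 x).Ground := by
  intro i
  show ((![x] : Fin 1 → TmD) i).Ground
  rw [Matrix.cons_val_fin_one x _ i]; exact hx

lemma ground_hD {x : TmD} (hx : x.Ground) : (hD19 x).Ground := by
  intro i
  show ((![x] : Fin 1 → TmD) i).Ground
  rw [Matrix.cons_val_fin_one x _ i]; exact hx

lemma ground_emb : ∀ t : Tm Sg19 ar19, t.Ground → (embD19 t).Ground := by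
  intro t
  induction t with
  | var n => intro h; exact absurd h (by simp [Tm.Ground])
  | app f ts ih =>
    intro h
    rw [emb_app]
    intro i
    exact ih i (h i)

end Aux14

theorem stmt_19 :
    -- (a) every ground term reaches `♯` and is reachable from `♯`, …
    (∀ t : Tm Sg19 ar19, t.Ground → Steps R19 t sharp19 ∧ Steps R19 sharp19 t) ∧
    -- … so the descendants of any nonempty `L ⊆ T_Σ` are all of `T_Σ`, …
    (∀ L : Set (Tm Sg19 ar19), (∀ t ∈ L, t.Ground) → L.Nonempty →
      Desc R19 L = {t : Tm Sg19 ar19 | t.Ground}) ∧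
    -- … in particular `R` preserves `Σ`-recognizability of finite tree languages;
    (∀ L : Set (Tm Sg19 ar19), L.Finite → (∀ t ∈ L, t.Ground) →
      Recognizable (Desc R19 L)) ∧
    -- (b) over `Δ`, `R*_Δ({f(g(h(♯)))}) = {fⁿ(gⁿ(h(t))) : n ≥ 1, t ∈ T_Σ}` …
    Desc R19D {fD19 (gD19 (hD19 (embD19 sharp19)))} =
      {u : Tm (Sg19 ⊕ Unit) arD19 | ∃ n : ℕ, 1 ≤ n ∧ ∃ t : Tm Sg19 ar19,
        t.Ground ∧ u = fD19^[n] (gD19^[n] (hD19 (embD19 t)))} ∧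
    -- … which is not recognizable, …
    ¬ Recognizable (Desc R19D {fD19 (gD19 (hD19 (embD19 sharp19)))}) ∧
    -- … hence `R` does not preserve recognizability of finite tree languages.
    ¬ PRF R19 := by
  refine ⟨fun t ht => ⟨ground_to_sharp t ht, sharp_to_ground t ht⟩,
    desc_eq_ground, ?_, ?_, ?_, ?_⟩
  · intro L hfin hg
    rcases L.eq_empty_or_nonempty with rfl | hne
    · rw [desc_empty]; exact recog_empty
    · rw [desc_eq_ground L hg hne]; exact recog_ground
  · exact descD_eq
  · rw [descD_eq]; exact not_recog_SD
  · intro hPRF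
    have hg : ∀ t ∈ ({fD19 (gD19 (hD19 (embD19 sharp19)))} : Set TmD), t.Ground := by
      intro t ht
      rw [Set.mem_singleton_iff] at ht
      subst ht
      exact ground_fD (ground_gD (ground_hD (ground_emb _ ground_sharp)))
    have hrec := hPRF (Sg19 ⊕ Unit) arD19 inferInstance Sum.inl Sum.inl_injective
      (fun _ => rfl) {fD19 (gD19 (hD19 (embD19 sharp19)))} (Set.finite_singleton _) hg
    apply not_recog_SD
    rw [← descD_eq]
    exact hrec
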